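/- Let R be a reaction network on n species and let R̂ = R ∪ {(y, y′)} where (y, y′) ∉ R is a single additional reaction (y, y′ ∈ ℕⁿ, y ≠ y′). Then δ(R̂) ≥ δ(R): adding a reaction to a reaction network cannot decrease its deficiency. -/

import Mathlib

open Finset

noncomputable section

namespace ReactionNetwork

/-- A (candidate) reaction network on `n` species: a finite set of ordered pairs
`(y, y')` of complexes `y, y' ∈ ℕⁿ`. -/
abbrev Rxn (n : ℕ) := Finset ((Fin n → ℕ) × (Fin n → ℕ))

/-- The set of complexes of a reaction network. -/
def complexes {n : ℕ} (R : Rxn n) : Finset (Fin n → ℕ) :=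
  R.image Prod.fst ∪ R.image Prod.snd

/-- The undirected graph on the complexes of `R`, with an edge `{y, y'}` for each
reaction `(y, y') ∈ R`. -/
def linkGraph {n : ℕ} (R : Rxn n) : SimpleGraph {y // y ∈ complexes R} where
  Adj a b := a ≠ b ∧ (((a : Fin n → ℕ), (b : Fin n → ℕ)) ∈ R ∨
    ((b : Fin n → ℕ), (a : Fin n → ℕ)) ∈ R)
  symm := ⟨fun a b h => ⟨h.1.symm, h.2.symm⟩⟩
  loopless := ⟨fun a h => h.1 rfl⟩

/-- The number of linkage classes of `R`: the number of connected components of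
the undirected graph on the complexes. -/
def numLC {n : ℕ} (R : Rxn n) : ℕ :=
  Nat.card (linkGraph R).ConnectedComponent

/-- The dimension of the stoichiometric subspace of `R`. -/
def stoichDim {n : ℕ} (R : Rxn n) : ℕ :=
  Module.finrank ℝ (Submodule.span ℝ
    {d : Fin n → ℝ | ∃ r ∈ R, d = fun i => ((r.2 i : ℝ) - (r.1 i : ℝ))})

/-- The deficiency of a reaction network: `|C(R)| - ℓ(R) - s(R)`. -/
def deficiency {n : ℕ} (R : Rxn n) : ℤ :=
  (complexes R).card - numLC R - stoichDim R

section Aux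

variable {n : ℕ}

/-- The set of reaction vectors of `R`. -/
def vset (R : Rxn n) : Set (Fin n → ℝ) :=
  {d : Fin n → ℝ | ∃ r ∈ R, d = fun i => ((r.2 i : ℝ) - (r.1 i : ℝ))}

lemma complexes_insert (R : Rxn n) (y y' : Fin n → ℕ) :
    complexes (insert (y, y') R) = insert y (insert y' (complexes R)) := by
  ext x
  simp only [complexes, Finset.mem_union, Finset.mem_image, Finset.mem_insert,
    Finset.mem_insert]
  constructor
  · rintro (⟨r, hr | hr, rfl⟩ | ⟨r, hr | hr, rfl⟩)
    · subst hr; exact Or.inl rfl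
    · exact Or.inr (Or.inr (Or.inl ⟨r, hr, rfl⟩))
    · subst hr; exact Or.inr (Or.inl rfl)
    · exact Or.inr (Or.inr (Or.inr ⟨r, hr, rfl⟩))
  · rintro (rfl | rfl | ⟨r, hr, rfl⟩ | ⟨r, hr, rfl⟩)
    · exact Or.inl ⟨(x, y'), Or.inl rfl, rfl⟩
    · exact Or.inr ⟨(y, x), Or.inl rfl, rfl⟩
    · exact Or.inl ⟨r, Or.inr hr, rfl⟩
    · exact Or.inr ⟨r, Or.inr hr, rfl⟩

lemma complexes_subset (R : Rxn n) (y y' : Fin n → ℕ) :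
    complexes R ⊆ complexes (insert (y, y') R) := by
  rw [complexes_insert]
  exact (Finset.subset_insert _ _).trans (Finset.subset_insert _ _)

/-- The inclusion of link graphs. -/
def incl (R : Rxn n) (y y' : Fin n → ℕ) :
    linkGraph R →g linkGraph (insert (y, y') R) where
  toFun a := ⟨a.1, complexes_subset R y y' a.2⟩
  map_rel' := by
    intro a b h
    refine ⟨fun e => h.1 (by cases a; cases b; simpa [Subtype.mk.injEq] using e), ?_⟩
    exact h.2.imp (Finset.mem_insert_of_mem) (Finset.mem_insert_of_mem)

lemma vset_insert (R : Rxn n) (y y' : Fin n → ℕ) :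
    vset (insert (y, y') R)
      = insert (fun i => (y' i : ℝ) - (y i : ℝ)) (vset R) := by
  ext d
  simp only [vset, Set.mem_setOf_eq, Finset.mem_insert, Set.mem_insert_iff]
  constructor
  · rintro ⟨r, rfl | hr, rfl⟩
    · exact Or.inl rfl
    · exact Or.inr ⟨r, hr, rfl⟩
  · rintro (rfl | ⟨r, hr, rfl⟩)
    · exact ⟨(y, y'), Or.inl rfl, rfl⟩
    · exact ⟨r, Or.inr hr, rfl⟩

lemma diff_mem_span_of_walk (R : Rxn n) {a b : {x // x ∈ complexes R}}
    (w : (linkGraph R).Walk a b) :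
    (fun i => ((b : Fin n → ℕ) i : ℝ) - ((a : Fin n → ℕ) i : ℝ))
      ∈ Submodule.span ℝ (vset R) := by
  induction w with
  | nil =>
    convert (Submodule.span ℝ (vset R)).zero_mem using 1
    funext i; simp
  | @cons u c b h p ih =>
    have h1 : (fun i => ((c : Fin n → ℕ) i : ℝ) - ((u : Fin n → ℕ) i : ℝ))
        ∈ Submodule.span ℝ (vset R) := by
      rcases h.2 with hr | hr
      · exact Submodule.subset_span ⟨((u : Fin n → ℕ), (c : Fin n → ℕ)), hr, rfl⟩
      · have h2 : (fun i => ((u : Fin n → ℕ) i : ℝ) - ((c : Fin n → ℕ) i : ℝ))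
            ∈ Submodule.span ℝ (vset R) :=
          Submodule.subset_span ⟨((c : Fin n → ℕ), (u : Fin n → ℕ)), hr, rfl⟩
        have := Submodule.neg_mem _ h2
        convert this using 1
        funext i; simp
    have := Submodule.add_mem _ ih h1
    convert this using 1
    funext i; simp [Pi.add_apply]

lemma finrank_span_insert_le (s : Set (Fin n → ℝ)) (v : Fin n → ℝ) :
    Module.finrank ℝ (Submodule.span ℝ (insert v s))
      ≤ Module.finrank ℝ (Submodule.span ℝ s) + 1 := by
  rw [Submodule.span_insert]
  refine (Submodule.finrank_add_le_finrank_add_finrank _ _).trans ?_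
  have h1 : Module.finrank ℝ (ℝ ∙ v) ≤ 1 := by
    rcases eq_or_ne v 0 with h | h
    · rw [h, Submodule.span_zero_singleton, finrank_bot]; omega
    · rw [finrank_span_singleton h]
  rw [add_comm]
  exact Nat.add_le_add_left h1 _

end Aux

/-- Adding a single reaction to a reaction network cannot
decrease its deficiency. -/
theorem deficiency_le_deficiency_insert (n : ℕ) (R : Rxn n)
    (hR : ∀ r ∈ R, r.1 ≠ r.2) (y y' : Fin n → ℕ) (hyy' : y ≠ y')
    (hnew : (y, y') ∉ R) :
    deficiency R ≤ deficiency (insert (y, y') R) := by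
  classical
  set R' : Rxn n := insert (y, y') R with hR'
  -- stoichiometric dimension bounds
  have hvset : vset R' = insert (fun i => (y' i : ℝ) - (y i : ℝ)) (vset R) :=
    vset_insert R y y'
  have hstoich_eq : ∀ (Q : Rxn n), stoichDim Q = Module.finrank ℝ
      (Submodule.span ℝ (vset Q)) := fun Q => rfl
  have hs_mono : stoichDim R ≤ stoichDim R' := by
    rw [hstoich_eq, hstoich_eq, hvset]
    exact Submodule.finrank_mono (Submodule.span_mono (Set.subset_insert _ _))
  have hs_le : stoichDim R' ≤ stoichDim R + 1 := by
    rw [hstoich_eq, hstoich_eq, hvset]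
    exact finrank_span_insert_le _ _
  -- membership of y, y' in complexes R'
  have hy : y ∈ complexes R' := by
    rw [hR', complexes_insert]; exact Finset.mem_insert_self _ _
  have hy' : y' ∈ complexes R' := by
    rw [hR', complexes_insert]
    exact Finset.mem_insert_of_mem (Finset.mem_insert_self _ _)
  -- the new edge
  have hadj : (linkGraph R').Adj ⟨y, hy⟩ ⟨y', hy'⟩ := by
    refine ⟨fun e => hyy' (congrArg Subtype.val e), Or.inl ?_⟩
    exact Finset.mem_insert_self _ _
  -- the induced map on connected components
  set φ : (linkGraph R).ConnectedComponent → (linkGraph R').ConnectedComponent :=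
    SimpleGraph.ConnectedComponent.map (incl R y y') with hφ
  have hφmk : ∀ (x : Fin n → ℕ) (hx : x ∈ complexes R) (hx' : x ∈ complexes R'),
      φ ((linkGraph R).connectedComponentMk ⟨x, hx⟩)
        = (linkGraph R').connectedComponentMk ⟨x, hx'⟩ := by
    intro x hx hx'
    rw [hφ, SimpleGraph.ConnectedComponent.map_mk]
    rfl
  have hCins : complexes R' = insert y (insert y' (complexes R)) := by
    rw [hR', complexes_insert]
  have hcover : ∀ c : (linkGraph R').ConnectedComponent,
      (∃ d, φ d = c) ∨ c = (linkGraph R').connectedComponentMk ⟨y, hy⟩ := by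
    refine SimpleGraph.ConnectedComponent.ind ?_
    intro w
    have hw : (w : Fin n → ℕ) ∈ insert y (insert y' (complexes R)) := by
      rw [← hCins]; exact w.2
    rcases Finset.mem_insert.1 hw with hwy | hw
    · right
      exact congrArg _ (Subtype.ext hwy)
    rcases Finset.mem_insert.1 hw with hwy | hw
    · right
      have h1 : (linkGraph R').connectedComponentMk w
          = (linkGraph R').connectedComponentMk ⟨y', hy'⟩ :=
        congrArg _ (Subtype.ext hwy)
      rw [h1]
      exact SimpleGraph.ConnectedComponent.eq.mpr hadj.symm.reachable
    · left
      exact ⟨(linkGraph R).connectedComponentMk ⟨w.1, hw⟩,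
        (hφmk w.1 hw w.2).trans (congrArg _ (Subtype.ext rfl))⟩
  have key : (complexes R).card + numLC R' + stoichDim R'
      ≤ (complexes R').card + numLC R + stoichDim R := by
    by_cases hy1 : y ∈ complexes R
    · by_cases hy2 : y' ∈ complexes R
      · -- both complexes old
        have hCeq : (complexes R').card = (complexes R).card := by
          rw [hCins, Finset.insert_eq_self.mpr (Finset.mem_insert_of_mem hy1),
            Finset.insert_eq_self.mpr hy2]
        have hsurj : Function.Surjective φ := by
          intro c
          rcases hcover c with ⟨d, hd⟩ | rfl
          · exact ⟨d, hd⟩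
          · exact ⟨(linkGraph R).connectedComponentMk ⟨y, hy1⟩, hφmk y hy1 hy⟩
        by_cases hr : (linkGraph R).Reachable ⟨y, hy1⟩ ⟨y', hy2⟩
        · -- same linkage class: stoichDim unchanged
          have hL : numLC R' ≤ numLC R :=
            Nat.card_le_card_of_surjective φ hsurj
          have hmem : (fun i => (y' i : ℝ) - (y i : ℝ))
              ∈ Submodule.span ℝ (vset R) := diff_mem_span_of_walk R hr.some
          have hseq : stoichDim R' = stoichDim R := by
            rw [hstoich_eq, hstoich_eq, hvset, Submodule.span_insert_eq_span hmem]
          omega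
        · -- different linkage classes: numLC drops
          have hne : (linkGraph R).connectedComponentMk ⟨y, hy1⟩
              ≠ (linkGraph R).connectedComponentMk ⟨y', hy2⟩ :=
            fun h => hr (SimpleGraph.ConnectedComponent.eq.mp h)
          have hcollide : φ ((linkGraph R).connectedComponentMk ⟨y, hy1⟩)
              = φ ((linkGraph R).connectedComponentMk ⟨y', hy2⟩) := by
            rw [hφmk y hy1 hy, hφmk y' hy2 hy']
            exact SimpleGraph.ConnectedComponent.eq.mpr hadj.reachable
          have hL : numLC R' < numLC R := by
            have hle : numLC R' ≤ numLC R :=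
              Nat.card_le_card_of_surjective φ hsurj
            rcases lt_or_eq_of_le hle with h | h
            · exact h
            · exfalso
              have hbij : Function.Bijective φ :=
                hsurj.bijective_of_nat_card_le (le_of_eq h.symm)
              exact hne (hbij.1 hcollide)
          omega
      · -- y old, y' new
        have hCeq : (complexes R').card = (complexes R).card + 1 := by
          rw [hCins, Finset.insert_eq_self.mpr
            (Finset.mem_insert_of_mem hy1), Finset.card_insert_of_notMem hy2]
        have hsurj : Function.Surjective φ := by
          intro c
          rcases hcover c with ⟨d, hd⟩ | rfl
          · exact ⟨d, hd⟩
          · exact ⟨(linkGraph R).connectedComponentMk ⟨y, hy1⟩, hφmk y hy1 hy⟩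
        have hL : numLC R' ≤ numLC R :=
          Nat.card_le_card_of_surjective φ hsurj
        omega
    · by_cases hy2 : y' ∈ complexes R
      · -- y new, y' old
        have hynotin : y ∉ insert y' (complexes R) := by
          intro h
          rcases Finset.mem_insert.1 h with h | h
          · exact hyy' h
          · exact hy1 h
        have hCeq : (complexes R').card = (complexes R).card + 1 := by
          rw [hCins, Finset.card_insert_of_notMem hynotin,
            Finset.insert_eq_self.mpr hy2]
        have hsurj : Function.Surjective φ := by
          intro c
          rcases hcover c with ⟨d, hd⟩ | rfl
          · exact ⟨d, hd⟩
          · refine ⟨(linkGraph R).connectedComponentMk ⟨y', hy2⟩, ?_⟩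
            rw [hφmk y' hy2 hy']
            exact SimpleGraph.ConnectedComponent.eq.mpr hadj.symm.reachable
        have hL : numLC R' ≤ numLC R :=
          Nat.card_le_card_of_surjective φ hsurj
        omega
      · -- both new
        have hynotin : y ∉ insert y' (complexes R) := by
          intro h
          rcases Finset.mem_insert.1 h with h | h
          · exact hyy' h
          · exact hy1 h
        have hCeq : (complexes R').card = (complexes R).card + 2 := by
          rw [hCins, Finset.card_insert_of_notMem hynotin,
            Finset.card_insert_of_notMem hy2]
        -- surjection from Option of components
        set f : Option (linkGraph R).ConnectedComponent →
            (linkGraph R').ConnectedComponent :=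
          fun o => o.elim ((linkGraph R').connectedComponentMk ⟨y, hy⟩) φ with hf
        have hsurj : Function.Surjective f := by
          intro c
          rcases hcover c with ⟨d, hd⟩ | rfl
          · exact ⟨some d, hd⟩
          · exact ⟨none, rfl⟩
        have hcardopt : Nat.card (Option (linkGraph R).ConnectedComponent)
            = numLC R + 1 := by
          have := Fintype.ofFinite (linkGraph R).ConnectedComponent
          simp [Nat.card_eq_fintype_card, numLC]
        have hL : numLC R' ≤ numLC R + 1 := by
          have := Nat.card_le_card_of_surjective f hsurj
          rw [hcardopt] at this
          exact this
        omega
  -- conclude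
  simp only [deficiency]
  omega

end ReactionNetwork
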